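/- Let X be an irreducible topological space and let f : U → V, g : V → U be continuous maps between dense open subsets U, V of X, inverse to each other. Suppose f extends to a continuous map F on a maximal dense open set Dom(f) ⊇ U and g extends to G on Dom(g) ⊇ V, such that F = f on U and G = g on V, and any two continuous maps into X that agree on a dense open subset of their common open domain agree everywhere on it. Then F and G restrict to mutually inverse homeomorphisms between F⁻¹(Dom(g)) and G⁻¹(Dom(f)), and U ⊆ F⁻¹(Dom(g)), V ⊆ G⁻¹(Dom(f)). -/
import Mathlib

/-- Abstract form of Lemma 3.6 of the paper: a birational self-map `f` with inverse `g`
has a canonical maximal representative. `F`, `G` are the extensions of `f`, `g` to their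
(maximal) dense open domains of definition; they restrict to mutually inverse
homeomorphisms between `F⁻¹(Dom g)` and `G⁻¹(Dom f)`, and these contain `U`, `V`. -/
theorem stmt_3 {X : Type*} [TopologicalSpace X] [IrreducibleSpace X]
    (U V : Set X) (hUo : IsOpen U) (hUd : Dense U) (hVo : IsOpen V) (hVd : Dense V)
    (f g F G : X → X)
    (hf : ContinuousOn f U) (hg : ContinuousOn g V)
    (hmapsf : Set.MapsTo f U V) (hmapsg : Set.MapsTo g V U)
    (hgf : ∀ x ∈ U, g (f x) = x) (hfg : ∀ y ∈ V, f (g y) = y)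
    (DomF DomG : Set X)
    (hDomFo : IsOpen DomF) (hDomFd : Dense DomF) (hDomGo : IsOpen DomG) (hDomGd : Dense DomG)
    (hUF : U ⊆ DomF) (hVG : V ⊆ DomG)
    (hFc : ContinuousOn F DomF) (hGc : ContinuousOn G DomG)
    (hFU : ∀ x ∈ U, F x = f x) (hGV : ∀ y ∈ V, G y = g y)
    -- maximality of the domains of definition
    (hFmax : ∀ D : Set X, IsOpen D → Dense D → DomF ⊆ D →
      (∃ F' : X → X, ContinuousOn F' D ∧ ∀ x ∈ DomF, F' x = F x) → D = DomF)
    (hGmax : ∀ D : Set X, IsOpen D → Dense D → DomG ⊆ D →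
      (∃ G' : X → X, ContinuousOn G' D ∧ ∀ y ∈ DomG, G' y = G y) → D = DomG)
    -- separation: continuous maps agreeing on a dense open subset of a common open
    -- domain agree on all of it
    (hSep : ∀ (D : Set X) (h k : X → X), IsOpen D → ContinuousOn h D → ContinuousOn k D →
      (∃ E : Set X, IsOpen E ∧ Dense E ∧ E ⊆ D ∧ ∀ x ∈ E, h x = k x) →
      ∀ x ∈ D, h x = k x) :
    Set.MapsTo F (DomF ∩ F ⁻¹' DomG) (DomG ∩ G ⁻¹' DomF) ∧
    Set.MapsTo G (DomG ∩ G ⁻¹' DomF) (DomF ∩ F ⁻¹' DomG) ∧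
    (∀ x ∈ DomF ∩ F ⁻¹' DomG, G (F x) = x) ∧
    (∀ y ∈ DomG ∩ G ⁻¹' DomF, F (G y) = y) ∧
    U ⊆ DomF ∩ F ⁻¹' DomG ∧ V ⊆ DomG ∩ G ⁻¹' DomF := by
  set A := DomF ∩ F ⁻¹' DomG with hA
  set B := DomG ∩ G ⁻¹' DomF with hB
  have hAo : IsOpen A := (hFc.isOpen_inter_preimage hDomFo hDomGo)
  have hBo : IsOpen B := (hGc.isOpen_inter_preimage hDomGo hDomFo)
  have hUA : U ⊆ A := fun x hx => ⟨hUF hx, by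
    show F x ∈ DomG; rw [hFU x hx]; exact hVG (hmapsf hx)⟩
  have hVB : V ⊆ B := fun y hy => ⟨hVG hy, by
    show G y ∈ DomF; rw [hGV y hy]; exact hUF (hmapsg hy)⟩
  have hAd : Dense A := hUd.mono hUA
  have hBd : Dense B := hVd.mono hVB
  have hGF : ∀ x ∈ A, G (F x) = x := by
    refine hSep A (G ∘ F) id hAo
      (hGc.comp (hFc.mono Set.inter_subset_left) (fun x hx => hx.2))
      continuousOn_id ⟨U, hUo, hUd, hUA, fun x hx => ?_⟩
    show G (F x) = x
    rw [hFU x hx, hGV _ (hmapsf hx)]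
    exact hgf x hx
  have hFG : ∀ y ∈ B, F (G y) = y := by
    refine hSep B (F ∘ G) id hBo
      (hFc.comp (hGc.mono Set.inter_subset_left) (fun y hy => hy.2))
      continuousOn_id ⟨V, hVo, hVd, hVB, fun y hy => ?_⟩
    show F (G y) = y
    rw [hGV y hy, hFU _ (hmapsg hy)]
    exact hfg y hy
  refine ⟨fun x hx => ⟨hx.2, ?_⟩, fun y hy => ⟨hy.2, ?_⟩, hGF, hFG, hUA, hVB⟩
  · show G (F x) ∈ DomF; rw [hGF x hx]; exact hx.1
  · show F (G y) ∈ DomG; rw [hFG y hy]; exact hy.1
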